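/- Let (Ω, P) be a probability space and let X : Fin 2 × Fin 2 → Fin N → Ω → ℝ be a mutually independent family of random variables, each taking values in {−1, 1}, such that for each (i,j) all N variables X (i,j) k have common mean μ(i,j). Let S = μ(0,0) + μ(1,0) + μ(0,1) − μ(1,1) and S̄ = m(0,0) + m(1,0) + m(0,1) − m(1,1) with m(i,j) = (1/N) ∑ₖ X (i,j) k. Then for every ε > 0, P[|S̄ − S| > ε] ≤ 4/(N ε²). In particular, for 0 < ε < 2√2 and 0 < δ < 1, if N ≥ 4/(δ ε²) then P[|S̄ − S| > ε] ≤ δ. -/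

import Mathlib

set_option synthInstance.maxHeartbeats 1000000
set_option maxHeartbeats 1000000

open MeasureTheory ProbabilityTheory Finset

noncomputable section

/-- Empirical mean `m(i,j) = (1/N) ∑ₖ X (i,j) k`. -/
def empMean {Ω : Type*} {N : ℕ} (X : Fin 2 × Fin 2 → Fin N → Ω → ℝ)
    (ij : Fin 2 × Fin 2) (ω : Ω) : ℝ :=
  (1 / N) * ∑ k, X ij k ω

/-- Empirical CHSH estimate `S̄ = m(0,0) + m(1,0) + m(0,1) − m(1,1)`. -/
def SbarEmp {Ω : Type*} {N : ℕ} (X : Fin 2 × Fin 2 → Fin N → Ω → ℝ) (ω : Ω) : ℝ :=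
  empMean X (0, 0) ω + empMean X (1, 0) ω + empMean X (0, 1) ω - empMean X (1, 1) ω

/-- True CHSH value `S = μ(0,0) + μ(1,0) + μ(0,1) − μ(1,1)`. -/
def Strue (μ : Fin 2 × Fin 2 → ℝ) : ℝ := μ (0, 0) + μ (1, 0) + μ (0, 1) - μ (1, 1)

end

/-- Chebyshev-based sample complexity for CHSH estimation: for every `ε > 0`,
`P[|S̄ − S| > ε] ≤ 4/(N ε²)`; in particular, for `0 < ε < 2√2` and `0 < δ < 1`,
`N ≥ 4/(δ ε²)` copies suffice to guarantee `P[|S̄ − S| > ε] ≤ δ`. -/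
theorem chebyshev_chsh_estimate {Ω : Type*} [MeasurableSpace Ω]
    (P : Measure Ω) [IsProbabilityMeasure P] (N : ℕ) (hN : 0 < N)
    (X : Fin 2 × Fin 2 → Fin N → Ω → ℝ)
    (hmeas : ∀ ij k, Measurable (X ij k))
    (hindep : iIndepFun (fun p : (Fin 2 × Fin 2) × Fin N => X p.1 p.2) P)
    (hval : ∀ ij k ω, X ij k ω = 1 ∨ X ij k ω = -1)
    (μ : Fin 2 × Fin 2 → ℝ)
    (hmean : ∀ ij k, ∫ ω, X ij k ω ∂P = μ ij) :
    (∀ ε : ℝ, 0 < ε →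
      (P {ω | ε < |SbarEmp X ω - Strue μ|}).toReal ≤ 4 / (N * ε ^ 2)) ∧
    (∀ ε δ : ℝ, 0 < ε → ε < 2 * Real.sqrt 2 → 0 < δ → δ < 1 →
      (N : ℝ) ≥ 4 / (δ * ε ^ 2) →
      (P {ω | ε < |SbarEmp X ω - Strue μ|}).toReal ≤ δ) := by
  have hNR : (0:ℝ) < N := Nat.cast_pos.mpr hN
  set c : Fin 2 × Fin 2 → ℝ := fun ij => if ij = (1,1) then -1 else 1 with hc
  have hcsq : ∀ ij, (c ij)^2 = 1 := by intro ij; by_cases h : ij = (1,1) <;> simp [hc, h]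
  set Y : (Fin 2 × Fin 2) × Fin N → Ω → ℝ := fun p ω => (c p.1 / N) * X p.1 p.2 ω with hY
  set T : Ω → ℝ := ∑ p : (Fin 2 × Fin 2) × Fin N, Y p with hT
  have habs : ∀ ij k ω, |X ij k ω| = 1 := by
    intro ij k ω; rcases hval ij k ω with h | h <;> simp [h]
  have hmemX : ∀ ij k, MemLp (X ij k) 2 P := by
    intro ij k
    exact MemLp.of_bound (hmeas ij k).aestronglyMeasurable 1
      (Filter.Eventually.of_forall fun ω => by rw [Real.norm_eq_abs, habs])
  have hmemY : ∀ p, MemLp (Y p) 2 P := fun p => (hmemX p.1 p.2).const_mul _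
  have h00 : c (0,0) = 1 := by simp [hc]
  have h01 : c (0,1) = 1 := by simp [hc]
  have h10 : c (1,0) = 1 := by simp [hc]
  have h11 : c (1,1) = -1 := by simp [hc]
  have hTeq : ∀ ω, T ω = SbarEmp X ω := by
    intro ω
    simp only [hT, hY, Finset.sum_apply]
    rw [Fintype.sum_prod_type]
    have hstep : ∀ ij : Fin 2 × Fin 2, ∑ k, (c ij / N) * X ij k ω = c ij * empMean X ij ω := by
      intro ij
      rw [← Finset.mul_sum, empMean]
      ring
    simp only [hstep]
    rw [show (Finset.univ : Finset (Fin 2 × Fin 2)) =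
      {(0,0), (0,1), (1,0), (1,1)} from by decide]
    rw [Finset.sum_insert (by decide), Finset.sum_insert (by decide),
      Finset.sum_insert (by decide), Finset.sum_singleton]
    rw [h00, h01, h10, h11, SbarEmp]
    ring
  have hintY : ∀ p : (Fin 2 × Fin 2) × Fin N,
      ∫ ω, Y p ω ∂P = (c p.1 / N) * μ p.1 := by
    intro p
    simp only [hY]
    rw [integral_const_mul, hmean]
  have hET : ∫ ω, T ω ∂P = Strue μ := by
    have h1 : ∫ ω, T ω ∂P = ∑ p : (Fin 2 × Fin 2) × Fin N, ∫ ω, Y p ω ∂P := by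
      simp only [hT, Finset.sum_apply]
      exact integral_finset_sum _ fun p _ => (hmemY p).integrable one_le_two
    rw [h1]
    simp only [hintY]
    rw [Fintype.sum_prod_type]
    have hstep : ∀ ij : Fin 2 × Fin 2, ∑ _k : Fin N, (c ij / N) * μ ij = c ij * μ ij := by
      intro ij
      rw [Finset.sum_const, card_univ, Fintype.card_fin, nsmul_eq_mul]
      field_simp
    simp only [hstep]
    rw [show (Finset.univ : Finset (Fin 2 × Fin 2)) =
      {(0,0), (0,1), (1,0), (1,1)} from by decide]
    rw [Finset.sum_insert (by decide), Finset.sum_insert (by decide),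
      Finset.sum_insert (by decide), Finset.sum_singleton]
    rw [h00, h01, h10, h11, Strue]
    ring
  have hvarX : ∀ ij k, variance (X ij k) P ≤ 1 := by
    intro ij k
    rw [variance_eq_sub (hmemX ij k)]
    have hsq : ∀ ω, (X ij k ω)^2 = 1 := by
      intro ω; rcases hval ij k ω with h | h <;> simp [h]
    have h2 : P[(X ij k)^2] = 1 := by
      simp only [Pi.pow_apply]
      rw [show (fun ω => X ij k ω ^ 2) = fun _ => (1:ℝ) from funext hsq]
      simp
    rw [h2]
    nlinarith [sq_nonneg (P[X ij k])]
  have hvarT : variance T P ≤ 4 / N := by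
    have hvsum : variance T P = ∑ p : (Fin 2 × Fin 2) × Fin N, variance (Y p) P := by
      rw [hT]
      exact IndepFun.variance_sum (fun p _ => hmemY p)
        (fun p _ q hq hpq => (hindep.indepFun hpq).comp
          (measurable_const_mul _) (measurable_const_mul _))
    rw [hvsum]
    have hbound : ∀ p : (Fin 2 × Fin 2) × Fin N, variance (Y p) P ≤ 1 / N^2 := by
      intro p
      simp only [hY]
      rw [variance_const_mul]
      have hcn : (c p.1 / N)^2 = 1 / N^2 := by rw [div_pow, hcsq]
      rw [hcn]
      calc (1:ℝ) / N^2 * variance (X p.1 p.2) P ≤ 1 / N^2 * 1 :=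
            mul_le_mul_of_nonneg_left (hvarX p.1 p.2) (by positivity)
        _ = 1 / N^2 := by ring
    calc ∑ p : (Fin 2 × Fin 2) × Fin N, variance (Y p) P
        ≤ ∑ _p : (Fin 2 × Fin 2) × Fin N, (1:ℝ) / N^2 :=
          Finset.sum_le_sum fun p _ => hbound p
      _ = ((4 * N : ℕ) : ℝ) * (1 / N^2) := by
          have hcard : (Finset.univ : Finset ((Fin 2 × Fin 2) × Fin N)).card = 4 * N := by
            rw [Finset.card_univ]
            simp only [Fintype.card_prod, Fintype.card_fin]
          rw [Finset.sum_const, hcard, nsmul_eq_mul]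
      _ = 4 / N := by push_cast; field_simp
  have hmemT : MemLp T 2 P := memLp_finset_sum' _ (fun p _ => hmemY p)
  have main : ∀ ε : ℝ, 0 < ε →
      (P {ω | ε < |SbarEmp X ω - Strue μ|}).toReal ≤ 4 / (N * ε ^ 2) := by
    intro ε hε
    have hsub : {ω | ε < |SbarEmp X ω - Strue μ|} ⊆ {ω | ε ≤ |T ω - P[T]|} := by
      intro ω hω
      simp only [Set.mem_setOf_eq] at hω ⊢
      rw [hET, hTeq ω]
      exact hω.le
    have hcheb := meas_ge_le_variance_div_sq (μ := P) hmemT hε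
    have hle : P {ω | ε < |SbarEmp X ω - Strue μ|} ≤ ENNReal.ofReal (variance T P / ε^2) :=
      le_trans (measure_mono hsub) hcheb
    have h2 : variance T P / ε^2 ≤ 4 / (N * ε^2) := by
      rw [div_le_div_iff₀ (by positivity) (by positivity)]
      have : variance T P * N ≤ 4 := by
        calc variance T P * N ≤ (4 / N) * N :=
              mul_le_mul_of_nonneg_right hvarT hNR.le
          _ = 4 := by field_simp
      nlinarith [sq_nonneg ε]
    calc (P {ω | ε < |SbarEmp X ω - Strue μ|}).toReal
        ≤ variance T P / ε^2 := ENNReal.toReal_le_of_le_ofReal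
            (div_nonneg (variance_nonneg _ _) (sq_nonneg ε)) hle
      _ ≤ 4 / (N * ε^2) := h2
  refine ⟨main, ?_⟩
  intro ε δ hε _ hδ _ hNδ
  calc (P {ω | ε < |SbarEmp X ω - Strue μ|}).toReal ≤ 4 / (N * ε^2) := main ε hε
    _ ≤ δ := by
        rw [div_le_iff₀ (by positivity)]
        rw [ge_iff_le, div_le_iff₀ (by positivity)] at hNδ
        nlinarith
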